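/- Let X be a (75,32,10,16) strongly regular graph containing a 4-clique K such that the vertices outside K split as (b_0,b_1,b_2,b_3,b_4)=(3,20,48,0,0) by number of neighbors in K. Let x1,x2,x3 be the three vertices with no neighbor in K. Then N(x1) ∩ N(x2) ∩ N(x3) = ∅, and consequently every vertex with exactly 2 neighbors in K is adjacent to exactly two of x1,x2,x3. -/

import Mathlib

open Finset

/-- The number of neighbors of `x` inside the vertex set `K`. -/
def nbrs {V : Type*} [DecidableEq V] (G : SimpleGraph V) [DecidableRel G.Adj]
    (K : Finset V) (x : V) : ℕ :=
  (K.filter (fun y => G.Adj x y)).card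

/-- The number of vertices outside `K` with exactly `i` neighbors in `K`. -/
def bcount {V : Type*} [Fintype V] [DecidableEq V] (G : SimpleGraph V) [DecidableRel G.Adj]
    (K : Finset V) (i : ℕ) : ℕ :=
  ((univ \ K).filter (fun x => nbrs G K x = i)).card

private lemma mu_card {V : Type*} [Fintype V] [DecidableEq V]
    (G : SimpleGraph V) [DecidableRel G.Adj]
    (hG : G.IsSRGWith 75 32 10 16) {a b : V} (hab : a ≠ b) (hnot : ¬ G.Adj a b) :
    (G.neighborFinset a ∩ G.neighborFinset b).card = 16 := by
  have h := hG.of_not_adj hab hnot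
  rw [← h]
  rw [← Set.toFinset_card]
  congr 1
  ext y
  simp only [Set.mem_toFinset]
  simp [SimpleGraph.commonNeighbors, SimpleGraph.mem_neighborFinset,
    SimpleGraph.mem_neighborSet]

/-- Case (3,20,48,0,0): the three vertices `x1,x2,x3` with no neighbor in the
4-clique `K` (all of whose neighbors lie among the 2-neighbor vertices) have
no common neighbor, and consequently every vertex with exactly 2 neighbors in
`K` is adjacent to exactly two of `x1,x2,x3`. -/
theorem stmt5 {V : Type*} [Fintype V] [DecidableEq V]
    (G : SimpleGraph V) [DecidableRel G.Adj]
    (hG : G.IsSRGWith 75 32 10 16)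
    (K : Finset V) (hK : G.IsNClique 4 K)
    (hb0 : bcount G K 0 = 3) (hb1 : bcount G K 1 = 20)
    (hb2 : bcount G K 2 = 48) (hb3 : bcount G K 3 = 0) (hb4 : bcount G K 4 = 0)
    (x1 x2 x3 : V) (h12 : x1 ≠ x2) (h13 : x1 ≠ x3) (h23 : x2 ≠ x3)
    (hX0 : (univ \ K).filter (fun x => nbrs G K x = 0) = {x1, x2, x3})
    (hN : ∀ i ∈ ({x1, x2, x3} : Finset V),
      G.neighborFinset i ⊆ (univ \ K).filter (fun y => nbrs G K y = 2)) :
    (G.neighborFinset x1 ∩ G.neighborFinset x2 ∩ G.neighborFinset x3 = ∅) ∧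
    ∀ y ∈ (univ \ K).filter (fun y => nbrs G K y = 2),
      (({x1, x2, x3} : Finset V).filter (fun z => G.Adj y z)).card = 2 := by
  classical
  set S : Finset V := (univ \ K).filter (fun y => nbrs G K y = 2) with hSdef
  set T : Finset V := ({x1, x2, x3} : Finset V) with hTdef
  have hS48 : S.card = 48 := hb2
  -- each xi has nbrs = 0
  have hx0 : ∀ i ∈ T, nbrs G K i = 0 := by
    intro i hi
    have : i ∈ (univ \ K).filter (fun x => nbrs G K x = 0) := by rw [hX0]; exact hi
    exact (mem_filter.mp this).2
  -- nonadjacency among x's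
  have hnadj : ∀ i ∈ T, ∀ j ∈ T, ¬ G.Adj i j := by
    intro i hi j hj hadj
    have hjN : j ∈ G.neighborFinset i := by
      rw [SimpleGraph.mem_neighborFinset]; exact hadj
    have hjS : j ∈ S := hN i hi hjN
    have h2 : nbrs G K j = 2 := (mem_filter.mp hjS).2
    have h0 : nbrs G K j = 0 := hx0 j hj
    omega
  have hx1T : x1 ∈ T := by simp [hTdef]
  have hx2T : x2 ∈ T := by simp [hTdef]
  have hx3T : x3 ∈ T := by simp [hTdef]
  set A := G.neighborFinset x1 with hAdef
  set B := G.neighborFinset x2 with hBdef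
  set C := G.neighborFinset x3 with hCdef
  have hA : A.card = 32 := by
    rw [SimpleGraph.card_neighborFinset_eq_degree]; exact hG.regular x1
  have hB : B.card = 32 := by
    rw [SimpleGraph.card_neighborFinset_eq_degree]; exact hG.regular x2
  have hC : C.card = 32 := by
    rw [SimpleGraph.card_neighborFinset_eq_degree]; exact hG.regular x3
  have hAB : (A ∩ B).card = 16 := mu_card G hG h12 (hnadj x1 hx1T x2 hx2T)
  have hAC : (A ∩ C).card = 16 := mu_card G hG h13 (hnadj x1 hx1T x3 hx3T)
  have hBC : (B ∩ C).card = 16 := mu_card G hG h23 (hnadj x2 hx2T x3 hx3T)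
  have hUS : A ∪ B ∪ C ⊆ S := by
    intro y hy
    rcases mem_union.mp hy with hy' | hy'
    · rcases mem_union.mp hy' with h | h
      · exact hN x1 hx1T h
      · exact hN x2 hx2T h
    · exact hN x3 hx3T hy'
  -- inclusion-exclusion
  have e1 : (A ∪ B).card + (A ∩ B).card = A.card + B.card := card_union_add_card_inter A B
  have e2 : (A ∪ B ∪ C).card + ((A ∪ B) ∩ C).card = (A ∪ B).card + C.card :=
    card_union_add_card_inter _ _
  have hdist : (A ∪ B) ∩ C = (A ∩ C) ∪ (B ∩ C) := union_inter_distrib_right ..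
  have e3 : ((A ∩ C) ∪ (B ∩ C)).card + ((A ∩ C) ∩ (B ∩ C)).card
      = (A ∩ C).card + (B ∩ C).card := card_union_add_card_inter _ _
  have hassoc : (A ∩ C) ∩ (B ∩ C) = A ∩ B ∩ C := by
    ext y; simp only [mem_inter]; tauto
  have hle : (A ∪ B ∪ C).card ≤ 48 := hS48 ▸ card_le_card hUS
  have ht : (A ∩ B ∩ C).card = 0 := by
    rw [hdist] at e2
    rw [hassoc] at e3
    omega
  have hempty : A ∩ B ∩ C = ∅ := card_eq_zero.mp ht
  refine ⟨hempty, ?_⟩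
  -- second part: counting
  have hTcard : T.card = 3 := by
    rw [hTdef, card_insert_of_notMem (by simp [h12, h13]),
      card_insert_of_notMem (by simp [h23]), card_singleton]
  have hsum : ∑ y ∈ S, (T.filter (fun z => G.Adj y z)).card = 96 := by
    have : ∀ y, (T.filter (fun z => G.Adj y z)).card
        = ∑ z ∈ T, if G.Adj y z then 1 else 0 := fun y => card_filter _ _
    simp_rw [this]
    rw [Finset.sum_comm]
    have hinner : ∀ z ∈ T, (∑ y ∈ S, if G.Adj y z then 1 else 0) = 32 := by
      intro z hz
      have hfz : S.filter (fun y => G.Adj y z) = G.neighborFinset z := by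
        ext y
        simp only [mem_filter, SimpleGraph.mem_neighborFinset]
        constructor
        · rintro ⟨_, h⟩; exact h.symm
        · intro h
          exact ⟨hN z hz (by rw [SimpleGraph.mem_neighborFinset]; exact h), h.symm⟩
      rw [← Finset.card_filter, hfz, SimpleGraph.card_neighborFinset_eq_degree]
      exact hG.regular z
    rw [Finset.sum_congr rfl hinner]
    simp [hTcard]
  have hle2 : ∀ y ∈ S, (T.filter (fun z => G.Adj y z)).card ≤ 2 := by
    intro y hy
    by_contra h
    push_neg at h
    have h3 : (T.filter (fun z => G.Adj y z)).card = 3 := by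
      have := card_filter_le T (fun z => G.Adj y z)
      omega
    have hall : T.filter (fun z => G.Adj y z) = T :=
      eq_of_subset_of_card_le (filter_subset _ _) (by omega)
    have hadj : ∀ z ∈ T, G.Adj y z := by
      intro z hz
      have : z ∈ T.filter (fun z => G.Adj y z) := by rw [hall]; exact hz
      exact (mem_filter.mp this).2
    have : y ∈ A ∩ B ∩ C := by
      rw [hAdef, hBdef, hCdef]
      simp only [mem_inter, SimpleGraph.mem_neighborFinset]
      exact ⟨⟨(hadj x1 hx1T).symm, (hadj x2 hx2T).symm⟩, (hadj x3 hx3T).symm⟩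
    rw [hempty] at this
    exact absurd this (notMem_empty y)
  intro y hy
  by_contra hne
  have hlt : (T.filter (fun z => G.Adj y z)).card < 2 := lt_of_le_of_ne (hle2 y hy) hne
  have : ∑ y ∈ S, (T.filter (fun z => G.Adj y z)).card < ∑ y ∈ S, 2 :=
    Finset.sum_lt_sum hle2 ⟨y, hy, hlt⟩
  rw [hsum] at this
  simp [hS48] at this
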